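/- Suppose f is analytic on the unit disk with Re f(z) < 1, Taylor coefficients a_n, a_0 \in [0,1), and p \in (0,1]. Let \{\zeta_n\} be nonnegative continuous functions on [0,1) with \sum \zeta_n locally uniformly convergent, and suppose \zeta_0(r) \ge (2/p) \sum_{n=1}^\infty \zeta_n(r) for r \in [0, R_1]. Then a_0^p \zeta_0(r) + \sum_{n=1}^\infty |a_n| \zeta_n(r) \le \zeta_0(r) for all r \le R_1. -/

import Mathlib

open Metric Complex intervalIntegral Filter Topology

lemma intE (m : ℤ) : (∫ θ in (0:ℝ)..(2*Real.pi), Complex.exp (m * θ * Complex.I))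
    = if m = 0 then (2*Real.pi : ℂ) else 0 := by
  rcases eq_or_ne m 0 with hm | hm
  · simp [hm, Real.pi_pos.le]
  · have hc : (m : ℂ) * Complex.I ≠ 0 := by
      simp [Complex.ext_iff, hm]
    have h : ∀ θ : ℝ, (m : ℂ) * θ * Complex.I = ((m : ℂ) * Complex.I) * θ := by
      intro θ; ring
    simp only [h]
    rw [integral_exp_mul_complex hc]
    have h2 : (m : ℂ) * Complex.I * (2 * Real.pi) = m * (2 * Real.pi * Complex.I) := by
      ring
    simp [h2, Complex.exp_int_mul_two_pi_mul_I, hm]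

lemma coeff_bound (f : ℂ → ℂ) (a : ℕ → ℂ) (a₀ : ℝ)
    (hsum : ∀ z ∈ ball (0 : ℂ) 1, HasSum (fun n => a n * z ^ n) (f z))
    (hre : ∀ z ∈ ball (0 : ℂ) 1, (f z).re < 1)
    (ha0 : a 0 = (a₀ : ℂ)) :
    ∀ n : ℕ, n ≠ 0 → ‖a n‖ ≤ 2 * (1 - a₀) := by
  intro n hn
  suffices H : ∀ r ∈ Set.Ioo (0:ℝ) 1, ‖a n‖ * r ^ n ≤ 2 * (1 - a₀) by
    have hne : (𝓝[Set.Ioo (0:ℝ) 1] 1).NeBot := right_nhdsWithin_Ioo_neBot one_pos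
    have htend : Filter.Tendsto (fun r : ℝ => ‖a n‖ * r ^ n)
        (𝓝[Set.Ioo (0:ℝ) 1] 1) (𝓝 (‖a n‖)) := by
      have : Filter.Tendsto (fun r : ℝ => ‖a n‖ * r ^ n) (𝓝 1)
          (𝓝 (‖a n‖ * 1 ^ n)) :=
        ((continuous_const.mul (continuous_pow n)).tendsto 1)
      simpa using this.mono_left nhdsWithin_le_nhds
    exact le_of_tendsto htend (Filter.eventually_of_mem self_mem_nhdsWithin H)
  intro r hr
  obtain ⟨hr0, hr1⟩ := hr
  have hπpos : (0:ℝ) < Real.pi := Real.pi_pos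
  set z : ℝ → ℂ := fun θ => (r : ℂ) * Complex.exp (θ * Complex.I) with hz
  have habsz : ∀ θ : ℝ, ‖z θ‖ = r := by
    intro θ
    simp [hz, Complex.norm_exp_ofReal_mul_I, abs_of_pos hr0]
  have hzmem : ∀ θ : ℝ, z θ ∈ ball (0:ℂ) 1 := by
    intro θ
    simp only [mem_ball, Complex.dist_eq, sub_zero]
    rw [habsz θ]; exact hr1
  -- summability of |a k| r^k
  have hA : Summable (fun k => ‖a k‖ * r ^ k) := by
    set r' : ℝ := (1 + r) / 2 with hr'
    have hrr' : r < r' := by rw [hr']; linarith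
    have hr'0 : 0 < r' := lt_trans hr0 hrr'
    have hr'1 : r' < 1 := by rw [hr']; linarith
    have hmem : (r' : ℂ) ∈ ball (0:ℂ) 1 := by
      simp only [mem_ball, Complex.dist_eq, sub_zero, Complex.norm_real, Real.norm_eq_abs]
      rw [abs_of_pos hr'0]; exact hr'1
    have h1 := (hsum _ hmem).summable
    have h2 : Filter.Tendsto (fun k => ‖a k * (r':ℂ) ^ k‖) atTop (𝓝 0) := by
      simpa using h1.tendsto_atTop_zero.norm
    obtain ⟨C, hC⟩ := h2.bddAbove_range
    have key : ∀ k, ‖a k‖ * r ^ k ≤ C * (r / r') ^ k := by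
      intro k
      have h3 : ‖a k * (r':ℂ)^k‖ ≤ C := hC ⟨k, rfl⟩
      have h4 : ‖a k * (r':ℂ)^k‖ = ‖a k‖ * r'^k := by
        rw [norm_mul, norm_pow, Complex.norm_real, Real.norm_eq_abs, abs_of_pos hr'0]
      rw [h4] at h3
      have h5 : ‖a k‖ * r ^ k = (‖a k‖ * r'^k) * (r/r')^k := by
        rw [mul_assoc, ← mul_pow]
        rw [mul_comm (r') (r/r'), div_mul_cancel₀ _ (ne_of_gt hr'0)]
      rw [h5]
      exact mul_le_mul_of_nonneg_right h3 (by positivity)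
    refine Summable.of_nonneg_of_le (fun k => by positivity) key ?_
    exact (summable_geometric_of_lt_one (by positivity)
      (by rw [div_lt_one hr'0]; exact hrr')).mul_left C
  -- pointwise algebra
  have hmul : ∀ (k : ℕ) (m : ℤ) (θ : ℝ),
      a k * z θ ^ k * Complex.exp (m * θ * Complex.I)
        = (a k * (r:ℂ) ^ k) * Complex.exp (((k + m : ℤ)) * θ * Complex.I) := by
    intro k m θ
    have he : ((k + m : ℤ) : ℂ) * θ * Complex.I
        = (k:ℂ) * (θ * Complex.I) + m * θ * Complex.I := by push_cast; ring
    rw [he, Complex.exp_add, Complex.exp_nat_mul]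
    simp only [hz, mul_pow]
    ring
  have hcz : ∀ θ : ℝ, (starRingEnd ℂ) (Complex.exp (θ*Complex.I))
      = Complex.exp (-(θ*Complex.I)) := by
    intro θ
    rw [← Complex.exp_conj, map_mul, Complex.conj_ofReal, Complex.conj_I]
    ring_nf
  have hmul2 : ∀ (k : ℕ) (m : ℤ) (θ : ℝ),
      (starRingEnd ℂ) (a k * z θ ^ k) * Complex.exp (m * θ * Complex.I)
        = ((starRingEnd ℂ) (a k) * (r:ℂ) ^ k) * Complex.exp (((m - k : ℤ)) * θ * Complex.I) := by
    intro k m θ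
    have he : ((m - k : ℤ) : ℂ) * θ * Complex.I
        = (k:ℂ) * (-(θ * Complex.I)) + m * θ * Complex.I := by push_cast; ring
    rw [he, Complex.exp_add, Complex.exp_nat_mul]
    simp only [hz, map_mul, map_pow, Complex.conj_ofReal, hcz]
    ring
  -- norms of the summands
  have hnorm : ∀ (k : ℕ) (m : ℤ) (θ : ℝ),
      ‖a k * z θ ^ k * Complex.exp (m * θ * Complex.I)‖ = ‖a k‖ * r ^ k := by
    intro k m θ
    have h1 : ‖Complex.exp (m*θ*Complex.I)‖ = 1 := by
      have : (m:ℂ)*θ*Complex.I = ((m*θ:ℝ):ℂ)*Complex.I := by push_cast; ring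
      rw [this, Complex.norm_exp_ofReal_mul_I]
    rw [norm_mul, norm_mul, norm_pow, habsz, h1, mul_one]
  have hcont : ∀ k : ℕ, Continuous fun θ : ℝ => a k * z θ ^ k := by
    intro k
    simp only [hz]
    fun_prop
  -- key sum-integral swap
  have key : ∀ m : ℤ, HasSum
      (fun k : ℕ => (a k * (r:ℂ)^k) * (if ((k : ℤ) + m) = 0 then (2*Real.pi:ℂ) else 0))
      (∫ θ in (0:ℝ)..(2*Real.pi), f (z θ) * Complex.exp (m * θ * Complex.I)) := by
    intro m
    have H := intervalIntegral.hasSum_integral_of_dominated_convergence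
      (μ := MeasureTheory.volume) (a := (0:ℝ)) (b := 2*Real.pi)
      (F := fun (k:ℕ) (θ:ℝ) => a k * z θ ^ k * Complex.exp (m * θ * Complex.I))
      (f := fun θ => f (z θ) * Complex.exp (m * θ * Complex.I))
      (fun k _ => ‖a k‖ * r ^ k)
      (fun k => (((hcont k).mul (by fun_prop)).aestronglyMeasurable))
      (fun k => .of_forall fun θ _ => le_of_eq (hnorm k m θ))
      (.of_forall fun θ _ => hA)
      (intervalIntegrable_const)
      (.of_forall fun θ _ => (hsum (z θ) (hzmem θ)).mul_right _)
    have heq : ∀ k : ℕ, (∫ θ in (0:ℝ)..(2*Real.pi), a k * z θ ^ k * Complex.exp (m*θ*Complex.I))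
        = (a k * (r:ℂ)^k) * (if ((k:ℤ) + m) = 0 then (2*Real.pi:ℂ) else 0) := by
      intro k
      rw [intervalIntegral.integral_congr (g := fun θ =>
        (a k * (r:ℂ)^k) * Complex.exp (((k + m : ℤ)) * θ * Complex.I)) (fun θ _ => hmul k m θ)]
      rw [intervalIntegral.integral_const_mul, intE]
    exact (funext heq : _) ▸ H
  have key2 : ∀ m : ℤ, HasSum
      (fun k : ℕ => ((starRingEnd ℂ) (a k) * (r:ℂ)^k) * (if (m - (k : ℤ)) = 0 then (2*Real.pi:ℂ) else 0))
      (∫ θ in (0:ℝ)..(2*Real.pi), (starRingEnd ℂ) (f (z θ)) * Complex.exp (m * θ * Complex.I)) := by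
    intro m
    have H := intervalIntegral.hasSum_integral_of_dominated_convergence
      (μ := MeasureTheory.volume) (a := (0:ℝ)) (b := 2*Real.pi)
      (F := fun (k:ℕ) (θ:ℝ) => (starRingEnd ℂ) (a k * z θ ^ k) * Complex.exp (m * θ * Complex.I))
      (f := fun θ => (starRingEnd ℂ) (f (z θ)) * Complex.exp (m * θ * Complex.I))
      (fun k _ => ‖a k‖ * r ^ k)
      (fun k => ((Complex.continuous_conj.comp (hcont k)).mul (by fun_prop)).aestronglyMeasurable)
      (fun k => .of_forall fun θ _ => by
        rw [norm_mul, RCLike.norm_conj, ← norm_mul]; exact le_of_eq (hnorm k m θ))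
      (.of_forall fun θ _ => hA)
      (intervalIntegrable_const)
      (.of_forall fun θ _ =>
        (((hsum (z θ) (hzmem θ)).map (starRingEnd ℂ).toAddMonoidHom continuous_conj).mul_right _))
    have heq : ∀ k : ℕ, (∫ θ in (0:ℝ)..(2*Real.pi),
          (starRingEnd ℂ) (a k * z θ ^ k) * Complex.exp (m*θ*Complex.I))
        = ((starRingEnd ℂ) (a k) * (r:ℂ)^k) * (if (m - (k:ℤ)) = 0 then (2*Real.pi:ℂ) else 0) := by
      intro k
      rw [intervalIntegral.integral_congr (g := fun θ =>
        ((starRingEnd ℂ) (a k) * (r:ℂ)^k) * Complex.exp (((m - k : ℤ)) * θ * Complex.I))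
        (fun θ _ => hmul2 k m θ)]
      rw [intervalIntegral.integral_const_mul, intE]
    exact (funext heq : _) ▸ H
  have hnorm0 : ∀ (k : ℕ) (θ : ℝ), ‖a k * z θ ^ k‖ = ‖a k‖ * r ^ k := by
    intro k θ
    rw [norm_mul, norm_pow, habsz]
  -- I1
  have I1 : (∫ θ in (0:ℝ)..(2*Real.pi), f (z θ) * Complex.exp ((-(n:ℤ)) * θ * Complex.I))
      = (a n * (r:ℂ)^n) * (2*Real.pi) := by
    have h := key (-(n:ℤ))
    have h2 : HasSum (fun k : ℕ => (a k * (r:ℂ)^k) *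
        (if ((k:ℤ) + -(n:ℤ)) = 0 then (2*Real.pi:ℂ) else 0))
        ((a n * (r:ℂ)^n) * (2*Real.pi)) := by
      have hfun : (fun k : ℕ => (a k * (r:ℂ)^k) *
          (if ((k:ℤ) + -(n:ℤ)) = 0 then (2*Real.pi:ℂ) else 0))
          = fun k => if k = n then (a n * (r:ℂ)^n) * (2*Real.pi:ℂ) else 0 := by
        funext k
        by_cases hk : k = n
        · subst hk; simp
        · have hne : ((k:ℤ) + -(n:ℤ)) ≠ 0 := by omega
          simp [hk, hne]
      rw [hfun]
      exact hasSum_ite_eq n _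
    have h3 := h.unique h2
    push_cast at h3
    exact h3
  -- I0
  have I0 : (∫ θ in (0:ℝ)..(2*Real.pi), f (z θ)) = (a 0) * (2*Real.pi) := by
    have h := key 0
    have hsimp : (fun θ:ℝ => f (z θ) * Complex.exp ((0:ℤ) * θ * Complex.I))
        = fun θ => f (z θ) := by
      funext θ; simp
    rw [hsimp] at h
    have h2 : HasSum (fun k : ℕ => (a k * (r:ℂ)^k) *
        (if ((k:ℤ) + 0) = 0 then (2*Real.pi:ℂ) else 0)) ((a 0) * (2*Real.pi)) := by
      have hfun : (fun k : ℕ => (a k * (r:ℂ)^k) *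
          (if ((k:ℤ) + 0) = 0 then (2*Real.pi:ℂ) else 0))
          = fun k => if k = 0 then (a 0) * (2*Real.pi:ℂ) else 0 := by
        funext k
        by_cases hk : k = 0
        · subst hk; simp
        · have hne : ((k:ℤ) + 0) ≠ 0 := by omega
          simp [hk, hne]
      rw [hfun]
      exact hasSum_ite_eq 0 _
    exact h.unique h2
  -- I2
  have I2 : (∫ θ in (0:ℝ)..(2*Real.pi),
      (starRingEnd ℂ) (f (z θ)) * Complex.exp ((-(n:ℤ)) * θ * Complex.I)) = 0 := by
    have h := key2 (-(n:ℤ))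
    have h2 : HasSum (fun k : ℕ => ((starRingEnd ℂ) (a k) * (r:ℂ)^k) *
        (if ((-(n:ℤ)) - (k:ℤ)) = 0 then (2*Real.pi:ℂ) else 0)) 0 := by
      have hfun : (fun k : ℕ => ((starRingEnd ℂ) (a k) * (r:ℂ)^k) *
          (if ((-(n:ℤ)) - (k:ℤ)) = 0 then (2*Real.pi:ℂ) else 0)) = fun _ => (0:ℂ) := by
        funext k
        have hne : ((-(n:ℤ)) - (k:ℤ)) ≠ 0 := by omega
        simp [hne]
      rw [hfun]
      exact hasSum_zero
    have h3 := h.unique h2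
    push_cast at h3
    exact h3
  -- continuity of θ ↦ f (z θ)
  have hFc : Continuous fun θ : ℝ => f (z θ) := by
    have hfeq : (fun θ:ℝ => f (z θ)) = fun θ => ∑' k, a k * z θ ^ k :=
      funext fun θ => ((hsum _ (hzmem θ)).tsum_eq).symm
    rw [hfeq]
    exact continuous_tsum hcont hA (fun k θ => le_of_eq (hnorm0 k θ))
  set e : ℝ → ℂ := fun θ => Complex.exp ((-(n:ℤ)) * θ * Complex.I) with he_def
  have hce : Continuous e := by
    simp only [he_def]; fun_prop
  have hint1 : IntervalIntegrable e MeasureTheory.volume 0 (2*Real.pi) :=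
    hce.intervalIntegrable _ _
  have hintF : IntervalIntegrable (fun θ => f (z θ) * e θ) MeasureTheory.volume 0 (2*Real.pi) :=
    (hFc.mul hce).intervalIntegrable _ _
  have hintFc : IntervalIntegrable (fun θ => (starRingEnd ℂ) (f (z θ)) * e θ)
      MeasureTheory.volume 0 (2*Real.pi) :=
    ((Complex.continuous_conj.comp hFc).mul hce).intervalIntegrable _ _
  have hsplit : ∀ θ:ℝ, ((1:ℂ) - ((f (z θ)).re : ℂ)) * e θ
      = e θ - (f (z θ) * e θ) / 2 - ((starRingEnd ℂ) (f (z θ)) * e θ) / 2 := by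
    intro θ
    have h : ((f (z θ)).re : ℂ) = (f (z θ) + (starRingEnd ℂ) (f (z θ)))/2 := by
      rw [Complex.add_conj]; push_cast; ring
    rw [h]; ring
  have I3 : (∫ θ in (0:ℝ)..(2*Real.pi), ((1:ℂ) - ((f (z θ)).re : ℂ)) * e θ)
      = -((Real.pi:ℂ) * (a n * (r:ℂ)^n)) := by
    rw [intervalIntegral.integral_congr (g := fun θ => e θ - (f (z θ) * e θ)/2
      - ((starRingEnd ℂ) (f (z θ)) * e θ)/2) (fun θ _ => hsplit θ)]
    rw [intervalIntegral.integral_sub ((hint1.sub (hintF.div_const 2))) (hintFc.div_const 2)]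
    rw [intervalIntegral.integral_sub hint1 (hintF.div_const 2)]
    rw [intervalIntegral.integral_div, intervalIntegral.integral_div]
    have hE : (∫ θ in (0:ℝ)..(2*Real.pi), e θ) = 0 := by
      simp only [he_def]
      have hEn : (-(n:ℤ)) ≠ 0 := by omega
      have h' := intE (-(n:ℤ))
      rw [if_neg hEn] at h'
      push_cast at h'
      exact h'
    rw [hE]
    simp only [he_def]
    rw [I1, I2]
    ring
  have hlt : ∀ θ:ℝ, (f (z θ)).re < 1 := fun θ => hre _ (hzmem θ)
  have I4 : ‖∫ θ in (0:ℝ)..(2*Real.pi), ((1:ℂ) - ((f (z θ)).re:ℂ)) * e θ‖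
      ≤ ∫ θ in (0:ℝ)..(2*Real.pi), (1 - (f (z θ)).re) := by
    refine (intervalIntegral.norm_integral_le_integral_norm (by positivity)).trans_eq ?_
    apply intervalIntegral.integral_congr
    intro θ _
    show ‖((1:ℂ) - ((f (z θ)).re:ℂ)) * e θ‖ = 1 - (f (z θ)).re
    have h1 : ‖e θ‖ = 1 := by
      simp only [he_def]
      have hh : ((-(n:ℤ)):ℂ)*θ*Complex.I = ((((-(n:ℤ)):ℝ)*θ:ℝ):ℂ)*Complex.I := by
        push_cast; ring
      rw [hh, Complex.norm_exp_ofReal_mul_I]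
    have h2 : ((1:ℂ) - ((f (z θ)).re:ℂ)) = ((1 - (f (z θ)).re : ℝ) : ℂ) := by
      push_cast; ring
    rw [norm_mul, h2]
    rw [h1, mul_one, Complex.norm_real, Real.norm_eq_abs]
    exact abs_of_nonneg (by linarith [hlt θ])
  have hintRe : IntervalIntegrable (fun θ => (f (z θ)).re) MeasureTheory.volume 0 (2*Real.pi) :=
    (Complex.continuous_re.comp hFc).intervalIntegrable _ _
  have I5 : (∫ θ in (0:ℝ)..(2*Real.pi), (1 - (f (z θ)).re)) = 2*Real.pi - 2*Real.pi * a₀ := by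
    rw [intervalIntegral.integral_sub intervalIntegrable_const hintRe]
    have hre2 : (∫ θ in (0:ℝ)..(2*Real.pi), (f (z θ)).re) = 2*Real.pi * a₀ := by
      have h := ContinuousLinearMap.intervalIntegral_comp_comm Complex.reCLM
        (hFc.intervalIntegrable (μ := MeasureTheory.volume) 0 (2*Real.pi))
      simp only [Complex.reCLM_apply] at h
      rw [h, I0, ha0]
      have hcast : ((a₀:ℂ) * (2*(Real.pi:ℂ))) = (((a₀ * (2*Real.pi)):ℝ):ℂ) := by
        push_cast; ring
      rw [hcast, Complex.ofReal_re]; ring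
    rw [hre2]
    simp
  have hfinal : Real.pi * (‖a n‖ * r ^ n) ≤ Real.pi * (2 * (1 - a₀)) := by
    have hnorm3 : ‖-((Real.pi:ℂ) * (a n * (r:ℂ)^n))‖ = Real.pi * (‖a n‖ * r^n) := by
      rw [norm_neg, norm_mul, norm_mul, norm_pow, Complex.norm_real, Real.norm_eq_abs,
        Complex.norm_real, Real.norm_eq_abs, abs_of_pos hπpos, abs_of_pos hr0]
    calc Real.pi * (‖a n‖ * r ^ n)
        = ‖∫ θ in (0:ℝ)..(2*Real.pi), ((1:ℂ) - ((f (z θ)).re:ℂ)) * e θ‖ := by rw [I3, hnorm3]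
      _ ≤ ∫ θ in (0:ℝ)..(2*Real.pi), (1 - (f (z θ)).re) := I4
      _ = 2*Real.pi - 2*Real.pi * a₀ := I5
      _ = Real.pi * (2*(1-a₀)) := by ring
  exact le_of_mul_le_mul_left hfinal hπpos

/-- Theorem 1(i): weighted Bohr inequality for `Re f < 1`, `p ∈ (0,1]`. -/
theorem bohr_weighted_P (f : ℂ → ℂ) (a : ℕ → ℂ) (a₀ p : ℝ) (ζ : ℕ → ℝ → ℝ) (R₁ : ℝ)
    (hsum : ∀ z ∈ ball (0 : ℂ) 1, HasSum (fun n => a n * z ^ n) (f z))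
    (hre : ∀ z ∈ ball (0 : ℂ) 1, (f z).re < 1)
    (ha0 : a 0 = (a₀ : ℂ)) (h0 : 0 ≤ a₀) (h1 : a₀ < 1)
    (hp0 : 0 < p) (hp1 : p ≤ 1)
    (hζnn : ∀ n, ∀ r ∈ Set.Ico (0 : ℝ) 1, 0 ≤ ζ n r)
    (hζc : ∀ n, ContinuousOn (ζ n) (Set.Ico 0 1))
    (hζs : ∀ r ∈ Set.Ico (0 : ℝ) 1, Summable fun n => ζ n r)
    (hR : R₁ ∈ Set.Ico (0 : ℝ) 1)
    (hmaj : ∀ r ∈ Set.Icc (0 : ℝ) R₁, (2 / p) * ∑' n : ℕ, ζ (n + 1) r ≤ ζ 0 r) :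
    ∀ r ∈ Set.Icc (0 : ℝ) R₁,
      a₀ ^ p * ζ 0 r + ∑' n : ℕ, ‖a (n + 1)‖ * ζ (n + 1) r ≤ ζ 0 r := by
  intro r hr
  have hr' : r ∈ Set.Ico (0:ℝ) 1 := ⟨hr.1, lt_of_le_of_lt hr.2 hR.2⟩
  have hζ0 : 0 ≤ ζ 0 r := hζnn 0 r hr'
  have hcb := coeff_bound f a a₀ hsum hre ha0
  have hS1 : Summable (fun n => ζ (n+1) r) :=
    (hζs r hr').comp_injective (add_left_injective 1)
  have hbound : ∀ n : ℕ, ‖a (n+1)‖ * ζ (n+1) r ≤ (2*(1-a₀)) * ζ (n+1) r := fun n =>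
    mul_le_mul_of_nonneg_right (hcb (n+1) (Nat.succ_ne_zero n)) (hζnn (n+1) r hr')
  have hS2 : Summable (fun n => ‖a (n+1)‖ * ζ (n+1) r) :=
    Summable.of_nonneg_of_le
      (fun n => mul_nonneg (norm_nonneg _) (hζnn _ r hr')) hbound (hS1.mul_left _)
  have htsum : (∑' n, ‖a (n+1)‖ * ζ (n+1) r) ≤ (2*(1-a₀)) * ∑' n, ζ (n+1) r := by
    rw [← tsum_mul_left]
    exact Summable.tsum_le_tsum hbound hS2 (hS1.mul_left _)
  have hT : (∑' n, ζ (n+1) r) ≤ (p/2) * ζ 0 r := by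
    have h := hmaj r hr
    calc (∑' n, ζ (n+1) r) = (p/2) * ((2/p) * ∑' n, ζ (n+1) r) := by
          field_simp
      _ ≤ (p/2) * ζ 0 r := mul_le_mul_of_nonneg_left h (by positivity)
  have hbern : a₀ ^ p ≤ 1 - p * (1 - a₀) := by
    have h := rpow_one_add_le_one_add_mul_self (s := a₀ - 1) (by linarith) hp0.le hp1
    have h1' : (1 + (a₀ - 1)) = a₀ := by ring
    rw [h1'] at h
    linarith
  calc a₀ ^ p * ζ 0 r + ∑' n, ‖a (n+1)‖ * ζ (n+1) r
      ≤ a₀ ^ p * ζ 0 r + (2*(1-a₀)) * ((p/2) * ζ 0 r) := by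
        have := htsum.trans (mul_le_mul_of_nonneg_left hT (by linarith))
        linarith
    _ = (a₀ ^ p + p * (1-a₀)) * ζ 0 r := by ring
    _ ≤ 1 * ζ 0 r := mul_le_mul_of_nonneg_right (by linarith) hζ0
    _ = ζ 0 r := one_mul _
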